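/- Every consistent static sentence is satisfiable: assuming sentences are encodable, if {φ} is a consistent set and φ is static, then there exists a pointed S5 model at which φ holds. -/

import Mathlib

inductive Sentence (α agent : Type) : Type
  | atom : α → Sentence α agent
  | perp : Sentence α agent
  | imp : Sentence α agent → Sentence α agent → Sentence α agent
  | box : agent → Sentence α agent → Sentence α agent
  | announce : Sentence α agent → Sentence α agent → Sentence α agent

def Sentence.neg {α agent : Type} (φ : Sentence α agent) : Sentence α agent :=
  φ.imp .perp

def Sentence.and {α agent : Type} (φ ψ : Sentence α agent) : Sentence α agent :=
  (φ.imp ψ.neg).neg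

/-- An S5 Kripke model over worlds `W`. -/
structure Worlds (α agent W : Type) where
  f : W → α → Prop
  view : agent → W → W → Prop
  equiv : ∀ a : agent, Equivalence (view a)

/-- Restriction of a model to a predicate on worlds: remove all epistemic links
with an endpoint at a `¬P` world (keeping reflexive loops). -/
def Worlds.restrict {α agent W : Type} (M : Worlds α agent W) (P : W → Prop) :
    Worlds α agent W where
  f := M.f
  view := fun a s t => M.view a s t ∧ (s = t ∨ (P s ∧ P t))
  equiv := fun a => by
    constructor
    · intro s; exact ⟨(M.equiv a).refl s, Or.inl rfl⟩
    · rintro s t ⟨h, rfl | ⟨hs, ht⟩⟩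
      · exact ⟨(M.equiv a).symm h, Or.inl rfl⟩
      · exact ⟨(M.equiv a).symm h, Or.inr ⟨ht, hs⟩⟩
    · rintro s t u ⟨h1, h1'⟩ ⟨h2, h2'⟩
      refine ⟨(M.equiv a).trans h1 h2, ?_⟩
      rcases h1' with rfl | ⟨hs, ht⟩
      · exact h2'
      · rcases h2' with rfl | ⟨_, hu⟩
        · exact Or.inr ⟨hs, ht⟩
        · exact Or.inr ⟨hs, hu⟩

/-- Kripke semantics for PAL. -/
def eval {α agent W : Type} (M : Worlds α agent W) (s : W) :
    Sentence α agent → Prop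
  | .atom p => M.f s p
  | .perp => False
  | .imp φ ψ => eval M s φ → eval M s ψ
  | .box i φ => ∀ t : W, M.view i s t → eval M t φ
  | .announce φ ψ => eval M s φ → eval (M.restrict (fun t => eval M t φ)) s ψ

/-- Logical equivalence: same truth value at every pointed model. -/
def EquivSent {α agent : Type} (φ ψ : Sentence α agent) : Prop :=
  ∀ (W : Type) (M : Worlds α agent W) (s : W), eval M s φ ↔ eval M s ψ

/-- A sentence is static if it contains no public announcement modality. -/
inductive Static {α agent : Type} : Sentence α agent → Prop
  | atom (p : α) : Static (.atom p)
  | perp : Static .perp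
  | imp {φ ψ : Sentence α agent} : Static φ → Static ψ → Static (.imp φ ψ)
  | box (i : agent) {φ : Sentence α agent} : Static φ → Static (.box i φ)

/-- Hilbert-style proof system for S5. -/
inductive Provable {α agent : Type} : Sentence α agent → Prop
  | s1 (φ ψ : Sentence α agent) : Provable (φ.imp (ψ.imp φ))
  | s2 (φ ψ γ : Sentence α agent) : Provable ((φ.imp (ψ.imp γ)).imp ((φ.imp ψ).imp (φ.imp γ)))
  | s3 (φ : Sentence α agent) : Provable (φ.neg.neg.imp φ)
  | distr (i : agent) (φ ψ : Sentence α agent) :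
      Provable ((Sentence.box i (φ.imp ψ)).imp ((Sentence.box i φ).imp (Sentence.box i ψ)))
  | ref (i : agent) (φ : Sentence α agent) : Provable ((Sentence.box i φ).imp φ)
  | trans (i : agent) (φ : Sentence α agent) :
      Provable ((Sentence.box i (Sentence.box i φ)).imp (Sentence.box i φ))
  | sym (i : agent) (φ : Sentence α agent) :
      Provable ((Sentence.box i φ).neg.imp (Sentence.box i (Sentence.box i φ).neg))
  | mp {φ ψ : Sentence α agent} : Provable (φ.imp ψ) → Provable φ → Provable ψ
  | nec (i : agent) {φ : Sentence α agent} : Provable φ → Provable (Sentence.box i φ)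

/-- Finite conjunction of a list of sentences. -/
def conjList {α agent : Type} : List (Sentence α agent) → Sentence α agent
  | [] => Sentence.perp.neg
  | φ :: l => φ.and (conjList l)

/-- A set of sentences is consistent if no finite conjunction of its members
provably implies `⊥`. -/
def ConsistentSet {α agent : Type} (Γ : Sentence α agent → Prop) : Prop :=
  ∀ L : List (Sentence α agent), (∀ φ ∈ L, Γ φ) → ¬ Provable ((conjList L).imp .perp)

/-- Maximal consistent set: consistent and containing `φ` or `¬φ` for each `φ`. -/
def MaximalConsistent {α agent : Type} (Γ : Sentence α agent → Prop) : Prop :=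
  ConsistentSet Γ ∧ ∀ φ : Sentence α agent, Γ φ ∨ Γ φ.neg

section Aux
open Classical

variable {α agent : Type}

/-- Derivations from a finite list of hypotheses. -/
inductive Deriv {α agent : Type} :
    List (Sentence α agent) → Sentence α agent → Prop
  | ax {L φ} : Provable φ → Deriv L φ
  | hyp {L φ} : φ ∈ L → Deriv L φ
  | mp {L φ ψ} : Deriv L (φ.imp ψ) → Deriv L φ → Deriv L ψ

lemma prov_imp_refl (φ : Sentence α agent) : Provable (φ.imp φ) :=
  Provable.mp (Provable.mp (Provable.s2 φ (φ.imp φ) φ) (Provable.s1 φ (φ.imp φ)))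
    (Provable.s1 φ φ)

lemma Deriv.weaken {L L' : List (Sentence α agent)} {φ}
    (h : Deriv L φ) (hs : ∀ χ ∈ L, χ ∈ L') : Deriv L' φ := by
  induction h with
  | ax p => exact .ax p
  | hyp hm => exact .hyp (hs _ hm)
  | mp _ _ ih1 ih2 => exact .mp ih1 ih2

lemma Deriv.deduction_aux {M : List (Sentence α agent)} {ψ}
    (h : Deriv M ψ) : ∀ {φ L}, M = φ :: L → Deriv L (φ.imp ψ) := by
  induction h with
  | ax p => intro φ L _; exact .mp (.ax (.s1 _ _)) (.ax p)
  | hyp hm =>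
    intro φ L hML
    subst hML
    rcases List.mem_cons.mp hm with rfl | hm'
    · exact .ax (prov_imp_refl _)
    · exact .mp (.ax (.s1 _ _)) (.hyp hm')
  | mp _ _ ih1 ih2 =>
    intro φ L hML
    exact .mp (.mp (.ax (.s2 _ _ _)) (ih1 hML)) (ih2 hML)

lemma Deriv.deduction {L : List (Sentence α agent)} {φ ψ}
    (h : Deriv (φ :: L) ψ) : Deriv L (φ.imp ψ) :=
  h.deduction_aux rfl

lemma Deriv.toProvable {φ : Sentence α agent} (h : Deriv [] φ) : Provable φ := by
  generalize hM : ([] : List (Sentence α agent)) = M at h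
  induction h with
  | ax p => exact p
  | hyp hm => subst hM; exact absurd hm List.not_mem_nil
  | mp _ _ ih1 ih2 => exact Provable.mp ih1 ih2

/-- ex falso in context -/
lemma Deriv.efq {L : List (Sentence α agent)} {φ} (h : Deriv L .perp) : Deriv L φ :=
  .mp (.ax (.s3 φ)) (.mp (.ax (.s1 Sentence.perp φ.neg)) h)

lemma Deriv.dne {L : List (Sentence α agent)} {φ} (h : Deriv L φ.neg.neg) :
    Deriv L φ := .mp (.ax (.s3 φ)) h

lemma Deriv.negE {L : List (Sentence α agent)} {φ}
    (h1 : Deriv L φ.neg) (h2 : Deriv L φ) : Deriv L .perp :=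
  Deriv.mp (φ := φ) (ψ := .perp) h1 h2

lemma prov_dni (φ : Sentence α agent) : Provable (φ.imp φ.neg.neg) := by
  have h1 : Deriv [φ.neg, φ] φ.neg := .hyp (by simp)
  have h2 : Deriv [φ.neg, φ] φ := .hyp (by simp)
  have h : Deriv [φ.neg, φ] (Sentence.perp (α := α) (agent := agent)) := h1.negE h2
  exact (h.deduction.deduction).toProvable

lemma prov_contrapose (φ ψ : Sentence α agent) :
    Provable ((φ.imp ψ).imp (ψ.neg.imp φ.neg)) := by
  have h1 : Deriv [φ, ψ.neg, φ.imp ψ] (φ.imp ψ) := .hyp (by simp)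
  have h2 : Deriv [φ, ψ.neg, φ.imp ψ] φ := .hyp (by simp)
  have h3 : Deriv [φ, ψ.neg, φ.imp ψ] ψ.neg := .hyp (by simp)
  have h : Deriv [φ, ψ.neg, φ.imp ψ] (Sentence.perp (α := α) (agent := agent)) :=
    h3.negE (h1.mp h2)
  exact (h.deduction.deduction.deduction).toProvable

lemma prov_contra_mp {φ ψ : Sentence α agent} (h : Provable (φ.imp ψ)) :
    Provable (ψ.neg.imp φ.neg) := Provable.mp (prov_contrapose φ ψ) h

lemma prov_imp_trans {φ ψ γ : Sentence α agent}
    (h1 : Provable (φ.imp ψ)) (h2 : Provable (ψ.imp γ)) : Provable (φ.imp γ) := by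
  have h : Deriv [φ] γ := .mp (.ax h2) (.mp (.ax h1) (.hyp (by simp)))

  exact h.deduction.toProvable

lemma prov_andE1 (φ ψ : Sentence α agent) : Provable ((φ.and ψ).imp φ) := by
  have ha : Deriv [φ, φ.neg, (φ.imp ψ.neg).neg] φ.neg := .hyp (by simp)
  have hb : Deriv [φ, φ.neg, (φ.imp ψ.neg).neg] φ := .hyp (by simp)
  have h1 : Deriv [φ, φ.neg, (φ.imp ψ.neg).neg] ψ.neg := Deriv.efq (ha.negE hb)
  have hc : Deriv [φ.neg, (φ.imp ψ.neg).neg] (φ.imp ψ.neg).neg := .hyp (by simp)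
  have h2 : Deriv [φ.neg, (φ.imp ψ.neg).neg] (Sentence.perp (α := α) (agent := agent)) :=
    hc.negE h1.deduction
  have h3 : Deriv [(φ.imp ψ.neg).neg] φ := Deriv.dne h2.deduction
  exact h3.deduction.toProvable

/-- boxing a whole derivation -/
lemma Deriv.box {L : List (Sentence α agent)} {φ} (i : agent) (h : Deriv L φ) :
    Deriv (L.map (Sentence.box i)) (Sentence.box i φ) := by
  induction h with
  | ax p => exact .ax (Provable.nec i p)
  | hyp hm => exact .hyp (List.mem_map_of_mem hm)
  | mp _ _ ih1 ih2 => exact .mp (.mp (.ax (.distr i _ _)) ih1) ih2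

/-- the B axiom -/
lemma prov_B (i : agent) (φ : Sentence α agent) :
    Provable (φ.imp (Sentence.box i (Sentence.box i φ.neg).neg)) := by
  have t : Provable ((Sentence.box i φ.neg).imp φ.neg) := Provable.ref i φ.neg
  have h1 : Provable (φ.neg.neg.imp (Sentence.box i φ.neg).neg) := prov_contra_mp t
  have h2 : Provable (φ.imp (Sentence.box i φ.neg).neg) :=
    prov_imp_trans (prov_dni φ) h1
  exact prov_imp_trans h2 (Provable.sym i φ.neg)

/-- the 4 axiom: derivable in S5 -/
lemma prov_four (i : agent) (φ : Sentence α agent) :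
    Provable ((Sentence.box i φ).imp (Sentence.box i (Sentence.box i φ))) := by
  have diaBox : Provable (((Sentence.box i (Sentence.box i φ).neg).neg).imp
      (Sentence.box i φ)) :=
    prov_imp_trans (prov_contra_mp (Provable.sym i φ)) (Provable.s3 _)
  have h3 : Provable ((Sentence.box i (Sentence.box i (Sentence.box i φ).neg).neg).imp
      (Sentence.box i (Sentence.box i φ))) :=
    Provable.mp (Provable.distr i _ _) (Provable.nec i diaBox)
  exact prov_imp_trans (prov_B i (Sentence.box i φ)) h3

/-! ### Consistency and maximal consistent sets -/

/-- Deriv-based consistency of a set. -/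
def DCon (Γ : Sentence α agent → Prop) : Prop :=
  ∀ L : List (Sentence α agent), (∀ χ ∈ L, Γ χ) → ¬ Deriv L .perp

def MCS (Γ : Sentence α agent → Prop) : Prop :=
  DCon Γ ∧ ∀ φ : Sentence α agent, Γ φ ∨ Γ φ.neg

lemma MCS.not_iff {Γ : Sentence α agent → Prop} (h : MCS Γ) (φ : Sentence α agent) :
    ¬ Γ φ ↔ Γ φ.neg := by
  constructor
  · intro hn; rcases h.2 φ with hφ | hφ
    · exact absurd hφ hn
    · exact hφ
  · intro hneg hφ
    have d1 : Deriv [φ, φ.neg] φ.neg := .hyp (by simp)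
    have d2 : Deriv [φ, φ.neg] φ := .hyp (by simp)
    exact h.1 [φ, φ.neg] (by rintro χ hχ; simp at hχ; rcases hχ with rfl | rfl <;> assumption)
      (d1.negE d2)

lemma MCS.mem_of_prov {Γ : Sentence α agent → Prop} (h : MCS Γ) {φ : Sentence α agent}
    (hp : Provable φ) : Γ φ := by
  by_contra hn
  have hneg := (h.not_iff φ).mp hn
  have d1 : Deriv [φ.neg] φ.neg := .hyp (by simp)
  exact h.1 [φ.neg] (by simpa using hneg) (d1.negE (.ax hp))

lemma MCS.mp {Γ : Sentence α agent → Prop} (h : MCS Γ) {φ ψ : Sentence α agent}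
    (h1 : Γ (φ.imp ψ)) (h2 : Γ φ) : Γ ψ := by
  by_contra hn
  have hneg := (h.not_iff ψ).mp hn
  have d1 : Deriv [φ.imp ψ, φ, ψ.neg] (φ.imp ψ) := .hyp (by simp)
  have d2 : Deriv [φ.imp ψ, φ, ψ.neg] φ := .hyp (by simp)
  have d3 : Deriv [φ.imp ψ, φ, ψ.neg] ψ.neg := .hyp (by simp)
  refine h.1 [φ.imp ψ, φ, ψ.neg] ?_ (d3.negE (d1.mp d2))
  rintro χ hχ; simp at hχ; rcases hχ with rfl | rfl | rfl <;> assumption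

lemma MCS.mp_prov {Γ : Sentence α agent → Prop} (h : MCS Γ) {φ ψ : Sentence α agent}
    (h1 : Provable (φ.imp ψ)) (h2 : Γ φ) : Γ ψ := h.mp (h.mem_of_prov h1) h2

lemma MCS.imp_iff {Γ : Sentence α agent → Prop} (h : MCS Γ) (φ ψ : Sentence α agent) :
    Γ (φ.imp ψ) ↔ (Γ φ → Γ ψ) := by
  constructor
  · exact fun h1 h2 => h.mp h1 h2
  · intro himp
    rcases h.2 φ with hφ | hφ
    · exact h.mp_prov (Provable.s1 ψ φ) (himp hφ)
    · have : Provable (φ.neg.imp (φ.imp ψ)) := by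
        have d1 : Deriv [φ, φ.neg] φ.neg := .hyp (by simp)
        have d2 : Deriv [φ, φ.neg] φ := .hyp (by simp)
        have d : Deriv [φ, φ.neg] ψ := Deriv.efq (d1.negE d2)
        exact d.deduction.deduction.toProvable
      exact h.mp_prov this hφ

end Aux
section Aux2
open Classical

variable {α agent : Type}

lemma split_list {Γ : Sentence α agent → Prop} {ψ : Sentence α agent} :
    ∀ L : List (Sentence α agent), (∀ χ ∈ L, Γ χ ∨ χ = ψ) →
      ∃ L' : List (Sentence α agent), (∀ χ ∈ L', Γ χ) ∧ ∀ χ ∈ L, χ ∈ ψ :: L' := by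
  intro L
  induction L with
  | nil => intro _; exact ⟨[], by simp, by simp⟩
  | cons χ L ih =>
    intro hmem
    obtain ⟨L', h1, h2⟩ := ih (fun x hx => hmem x (List.mem_cons_of_mem _ hx))
    rcases hmem χ (by simp) with hχ | rfl
    · refine ⟨χ :: L', ?_, ?_⟩
      · rintro x hx
        rcases List.mem_cons.mp hx with rfl | hx
        · exact hχ
        · exact h1 x hx
      · intro x hx
        rcases List.mem_cons.mp hx with rfl | hx
        · simp
        · have := h2 x hx; simp at this ⊢; tauto
    · refine ⟨L', h1, ?_⟩
      intro x hx
      rcases List.mem_cons.mp hx with rfl | hx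
      · simp
      · exact h2 x hx

lemma DCon.insert_or {Γ : Sentence α agent → Prop} (h : DCon Γ) (ψ : Sentence α agent) :
    DCon (fun χ => Γ χ ∨ χ = ψ) ∨ DCon (fun χ => Γ χ ∨ χ = ψ.neg) := by
  by_contra hc
  push_neg at hc
  obtain ⟨h1, h2⟩ := hc
  simp only [DCon, not_forall, not_not] at h1 h2
  obtain ⟨L1, hL1, hd1⟩ := h1
  obtain ⟨L2, hL2, hd2⟩ := h2
  obtain ⟨L1', m1, s1⟩ := split_list L1 hL1
  obtain ⟨L2', m2, s2⟩ := split_list L2 hL2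
  have d1 : Deriv L1' ψ.neg := (hd1.weaken s1).deduction
  have d2 : Deriv L2' ψ.neg.neg := (hd2.weaken s2).deduction
  have dd : Deriv (L1' ++ L2') (Sentence.perp (α := α) (agent := agent)) :=
    Deriv.negE (φ := ψ.neg) (d2.weaken fun χ hχ => List.mem_append_right _ hχ)
      (d1.weaken fun χ hχ => List.mem_append_left _ hχ)
  refine h (L1' ++ L2') ?_ dd
  intro χ hχ
  rcases List.mem_append.mp hχ with h' | h'
  exacts [m1 _ h', m2 _ h']

open Classical in
noncomputable def insertChoice (Γ : Sentence α agent → Prop) (ψ : Sentence α agent) :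
    Sentence α agent → Prop :=
  if DCon (fun χ => Γ χ ∨ χ = ψ) then fun χ => Γ χ ∨ χ = ψ
  else fun χ => Γ χ ∨ χ = ψ.neg

lemma insertChoice_dcon {Γ : Sentence α agent → Prop} (h : DCon Γ) (ψ : Sentence α agent) :
    DCon (insertChoice Γ ψ) := by
  unfold insertChoice
  split
  · assumption
  · rcases h.insert_or ψ with h' | h'
    · exact absurd h' (by assumption)
    · exact h'

lemma insertChoice_sub {Γ : Sentence α agent → Prop} {ψ χ : Sentence α agent}
    (h : Γ χ) : insertChoice Γ ψ χ := by
  unfold insertChoice; split <;> exact Or.inl h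

lemma insertChoice_mem {Γ : Sentence α agent → Prop} (ψ : Sentence α agent) :
    insertChoice Γ ψ ψ ∨ insertChoice Γ ψ ψ.neg := by
  unfold insertChoice; split
  · exact Or.inl (Or.inr rfl)
  · exact Or.inr (Or.inr rfl)

noncomputable def lchain [Encodable (Sentence α agent)] (Γ : Sentence α agent → Prop) :
    ℕ → Sentence α agent → Prop
  | 0 => Γ
  | n + 1 =>
    match Encodable.decode (α := Sentence α agent) n with
    | none => lchain Γ n
    | some ψ => insertChoice (lchain Γ n) ψ

variable [Encodable (Sentence α agent)]

lemma lchain_dcon {Γ : Sentence α agent → Prop} (h : DCon Γ) :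
    ∀ n, DCon (lchain Γ n) := by
  intro n
  induction n with
  | zero => exact h
  | succ n ih =>
    show DCon (lchain Γ (n + 1))
    unfold lchain
    cases Encodable.decode (α := Sentence α agent) n with
    | none => exact ih
    | some ψ => exact insertChoice_dcon ih ψ

lemma lchain_succ_sub {Γ : Sentence α agent → Prop} {χ : Sentence α agent} {n : ℕ}
    (h : lchain Γ n χ) : lchain Γ (n + 1) χ := by
  show lchain Γ (n + 1) χ
  unfold lchain
  cases Encodable.decode (α := Sentence α agent) n with
  | none => exact h
  | some ψ => exact insertChoice_sub h

lemma lchain_mono {Γ : Sentence α agent → Prop} {χ : Sentence α agent} {m n : ℕ}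
    (hmn : m ≤ n) (h : lchain Γ m χ) : lchain Γ n χ := by
  induction n, hmn using Nat.le_induction with
  | base => exact h
  | succ n _ ih => exact lchain_succ_sub ih

/-- The Lindenbaum extension. -/
def limitSet (Γ : Sentence α agent → Prop) : Sentence α agent → Prop :=
  fun χ => ∃ n, lchain Γ n χ

lemma limitSet_bound {Γ : Sentence α agent → Prop} :
    ∀ L : List (Sentence α agent), (∀ χ ∈ L, limitSet Γ χ) →
      ∃ n, ∀ χ ∈ L, lchain Γ n χ := by
  intro L
  induction L with
  | nil => intro _; exact ⟨0, by simp⟩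
  | cons χ L ih =>
    intro hmem
    obtain ⟨n, hn⟩ := ih (fun x hx => hmem x (List.mem_cons_of_mem _ hx))
    obtain ⟨m, hm⟩ := hmem χ (by simp)
    refine ⟨max m n, ?_⟩
    intro x hx
    rcases List.mem_cons.mp hx with rfl | hx
    · exact lchain_mono (le_max_left m n) hm
    · exact lchain_mono (le_max_right m n) (hn x hx)

lemma lindenbaum {Γ : Sentence α agent → Prop} (h : DCon Γ) :
    ∃ Δ : Sentence α agent → Prop, MCS Δ ∧ ∀ χ, Γ χ → Δ χ := by
  refine ⟨limitSet Γ, ⟨?_, ?_⟩, fun χ hχ => ⟨0, hχ⟩⟩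
  · intro L hmem hd
    obtain ⟨n, hn⟩ := limitSet_bound L hmem
    exact lchain_dcon h n L hn hd
  · intro φ
    have hdec : Encodable.decode (α := Sentence α agent) (Encodable.encode φ) = some φ :=
      Encodable.encodek φ
    have heq : lchain Γ (Encodable.encode φ + 1) =
        insertChoice (lchain Γ (Encodable.encode φ)) φ := by
      conv_lhs => unfold lchain
      rw [hdec]
    rcases insertChoice_mem (Γ := lchain Γ (Encodable.encode φ)) φ with h' | h'
    · exact Or.inl ⟨Encodable.encode φ + 1, heq ▸ h'⟩
    · exact Or.inr ⟨Encodable.encode φ + 1, heq ▸ h'⟩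

/-! ### Canonical model -/

def CanonW (α agent : Type) : Type := {Γ : Sentence α agent → Prop // MCS Γ}

def canonModel (α agent : Type) : Worlds α agent (CanonW α agent) where
  f Γ p := Γ.1 (.atom p)
  view i Γ Δ := ∀ ψ, Γ.1 (.box i ψ) ↔ Δ.1 (.box i ψ)
  equiv _ := ⟨fun _ _ => Iff.rfl, fun h ψ => (h ψ).symm, fun h1 h2 ψ => (h1 ψ).trans (h2 ψ)⟩

lemma existence {Γ : Sentence α agent → Prop} (hΓ : MCS Γ) {i : agent}
    {ψ : Sentence α agent} (h : ¬ Γ (.box i ψ)) :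
    ∃ Δ : Sentence α agent → Prop, MCS Δ ∧
      (∀ χ, Γ (.box i χ) ↔ Δ (.box i χ)) ∧ ¬ Δ ψ := by
  set Δ0 : Sentence α agent → Prop := fun χ => Γ (.box i χ) ∨ χ = ψ.neg with hΔ0
  have hdcon : DCon Δ0 := by
    intro L hmem hd
    obtain ⟨L', m1, s1⟩ := split_list (Γ := fun χ => Γ (.box i χ)) L hmem
    have d1 : Deriv L' ψ := ((hd.weaken s1).deduction).dne
    have d2 : Deriv (L'.map (Sentence.box i)) (Sentence.box i ψ) := d1.box i
    have hnegbox : Γ (Sentence.box i ψ).neg := (hΓ.not_iff _).mp h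
    have d3 : Deriv ((Sentence.box i ψ).neg :: L'.map (Sentence.box i)) (Sentence.box i ψ).neg :=
      .hyp (by simp)
    have d4 : Deriv ((Sentence.box i ψ).neg :: L'.map (Sentence.box i))
        (Sentence.perp (α := α) (agent := agent)) :=
      d3.negE (d2.weaken fun χ hχ => List.mem_cons_of_mem _ hχ)
    refine hΓ.1 _ ?_ d4
    intro χ hχ
    rcases List.mem_cons.mp hχ with rfl | hχ
    · exact hnegbox
    · obtain ⟨x, hx, rfl⟩ := List.mem_map.mp hχ
      exact m1 x hx
  obtain ⟨Δ, hΔ, hsub⟩ := lindenbaum hdcon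
  refine ⟨Δ, hΔ, ?_, ?_⟩
  · intro χ
    constructor
    · intro hb
      have h4 : Γ (Sentence.box i (Sentence.box i χ)) := hΓ.mp_prov (prov_four i χ) hb
      exact hsub _ (Or.inl h4)
    · intro hb
      by_contra hn
      have h5 : Γ (Sentence.box i (Sentence.box i χ).neg) :=
        hΓ.mp_prov (Provable.sym i χ) ((hΓ.not_iff _).mp hn)
      have : Δ (Sentence.box i χ).neg := hsub _ (Or.inl h5)
      exact (hΔ.not_iff _).mpr this hb
  · have hnegψ : Δ ψ.neg := hsub _ (Or.inr rfl)
    exact (hΔ.not_iff _).mpr hnegψ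

lemma truth_lemma {φ : Sentence α agent} (hφ : Static φ) :
    ∀ Γ : CanonW α agent, eval (canonModel α agent) Γ φ ↔ Γ.1 φ := by
  induction hφ with
  | atom p => intro Γ; exact Iff.rfl
  | perp =>
    intro Γ
    simp only [eval, false_iff]
    intro hc
    exact Γ.2.1 [.perp] (by simpa using hc) (.hyp (by simp))
  | @imp φ ψ _ _ ih1 ih2 =>
    intro Γ
    have : eval (canonModel α agent) Γ (φ.imp ψ) ↔
        (eval (canonModel α agent) Γ φ → eval (canonModel α agent) Γ ψ) := Iff.rfl
    rw [this, ih1 Γ, ih2 Γ, Γ.2.imp_iff]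
  | @box i φ _ ih =>
    intro Γ
    have heval : eval (canonModel α agent) Γ (Sentence.box i φ) ↔
        (∀ Δ : CanonW α agent, (canonModel α agent).view i Γ Δ →
          eval (canonModel α agent) Δ φ) := Iff.rfl
    rw [heval]
    constructor
    · intro hall
      by_contra hn
      obtain ⟨Δ, hΔ, hiff, hnψ⟩ := existence Γ.2 hn
      have hview : (canonModel α agent).view i Γ ⟨Δ, hΔ⟩ := hiff
      exact hnψ ((ih ⟨Δ, hΔ⟩).mp (hall ⟨Δ, hΔ⟩ hview))
    · intro hb Δ hview
      have hΔb : Δ.1 (Sentence.box i φ) := (hview φ).mp hb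
      exact (ih Δ).mpr (Δ.2.mp_prov (Provable.ref i φ) hΔb)

end Aux2
theorem consistent_satisfiable {α agent : Type} [Encodable (Sentence α agent)]
    (φ : Sentence α agent) (hφ : Static φ)
    (h : ConsistentSet (fun ψ => ψ = φ)) :
    ∃ (W : Type) (M : Worlds α agent W) (s : W), eval M s φ := by
  have hdcon : DCon (fun ψ => ψ = φ) := by
    intro L hmem hd
    have hw : Deriv [φ] (Sentence.perp (α := α) (agent := agent)) :=
      hd.weaken (fun χ hχ => by rw [hmem χ hχ]; simp)
    have hp : Provable (φ.imp .perp) := hw.deduction.toProvable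
    have hc : Provable ((conjList [φ]).imp (Sentence.perp (α := α) (agent := agent))) :=
      prov_imp_trans (prov_andE1 φ (conjList [])) hp
    exact h [φ] (by simp) hc
  obtain ⟨Δ, hΔ, hsub⟩ := lindenbaum hdcon
  refine ⟨CanonW α agent, canonModel α agent, ⟨Δ, hΔ⟩, ?_⟩
  exact (truth_lemma hφ ⟨Δ, hΔ⟩).mpr (hsub φ rfl)
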